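/- Let p be an odd prime, q = p^e with e > 0, and π = (q-1)/2. Then for every integer t with 0 ≤ t < q, 2^{2t} · (-1)^t · C(π, t) ≡ C(2t, t) (mod p). Equivalently, in any commutative ring of characteristic p, (-1)^t · C(π,t) = λ_t where λ_t = 2^{-2t}·C(2t,t) (note 2 is invertible in characteristic p). -/
import Mathlib

open Nat

private lemma base_case_aux (p : ℕ) (hp : p.Prime) (hodd : Odd p) (t : ℕ) (ht : t < p) :
    (4 : ZMod p) ^ t * (-1) ^ t * (((p - 1) / 2).choose t : ZMod p)
      = ((2 * t).choose t : ZMod p) := by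
  have hfact : Fact p.Prime := ⟨hp⟩
  induction t with
  | zero => simp
  | succ t ih =>
    have ht' : t < p := lt_of_succ_lt ht
    have IH := ih ht'
    set m := (p - 1) / 2 with hm
    have hne : ((t : ZMod p) + 1) ≠ 0 := by
      have : ((t + 1 : ℕ) : ZMod p) ≠ 0 := by
        rw [Ne, ZMod.natCast_eq_zero_iff]
        exact Nat.not_dvd_of_pos_of_lt (succ_pos t) ht
      push_cast at this; exact this
    apply mul_left_cancel₀ hne
    have A : (m.choose (t + 1) : ZMod p) * ((t : ZMod p) + 1)
        = (m.choose t : ZMod p) * ((m - t : ℕ) : ZMod p) := by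
      have := congrArg (Nat.cast : ℕ → ZMod p) (Nat.choose_succ_right_eq m t)
      push_cast at this; linear_combination this
    have B : ((t : ZMod p) + 1) * (((2 * (t + 1)).choose (t + 1) : ℕ) : ZMod p)
        = 2 * (2 * (t : ZMod p) + 1) * (((2 * t).choose t : ℕ) : ZMod p) := by
      have := congrArg (Nat.cast : ℕ → ZMod p) (Nat.succ_mul_centralBinom_succ t)
      simp only [Nat.centralBinom] at this
      push_cast at this
      linear_combination this
    have C : ((m - t : ℕ) : ZMod p) * (m.choose t : ZMod p)
        = ((m : ZMod p) - (t : ZMod p)) * (m.choose t : ZMod p) := by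
      rcases le_or_gt t m with h | h
      · rw [Nat.cast_sub h]
      · rw [Nat.choose_eq_zero_of_lt h]; simp
    have F : 2 * ((m : ZMod p) - (t : ZMod p)) = -(2 * (t : ZMod p) + 1) := by
      have h2m : (2 * m : ℕ) = p - 1 := by
        obtain ⟨k, hk⟩ := hodd
        omega
      have h1 : ((2 * m : ℕ) : ZMod p) = ((p - 1 : ℕ) : ZMod p) := by rw [h2m]
      have hp1 : ((p - 1 : ℕ) : ZMod p) = -1 := by
        rw [Nat.cast_sub hp.one_lt.le]
        simp
      push_cast at h1
      rw [hp1] at h1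
      linear_combination h1
    rw [pow_succ, pow_succ]
    linear_combination (-4 * (4:ZMod p)^t * (-1:ZMod p)^t) * A + (-1 : ZMod p) * B
      + (2 * (2 * (t:ZMod p) + 1)) * IH + (-4 * (4:ZMod p)^t * (-1:ZMod p)^t) * C
      + (-2 * (4:ZMod p)^t * (-1:ZMod p)^t * (m.choose t : ZMod p)) * F

private lemma key_aux (p : ℕ) (hp : p.Prime) (hodd : Odd p) :
    ∀ e t : ℕ, t < p ^ e →
      (4 : ZMod p) ^ t * (-1) ^ t * (((p ^ e - 1) / 2).choose t : ZMod p)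
        = ((2 * t).choose t : ZMod p) := by
  have hfact : Fact p.Prime := ⟨hp⟩
  intro e
  induction e with
  | zero =>
    intro t ht
    rw [pow_zero, Nat.lt_one_iff] at ht
    subst ht
    simp
  | succ e ih =>
    intro t ht
    have hodd' : Odd p := hodd
    obtain ⟨k, hk⟩ := hodd
    obtain ⟨u, hu⟩ := (hodd'.pow : Odd (p ^ e))
    set s := t / p with hs
    set r := t % p with hr
    have hppos : 0 < p := hp.pos
    have hrp : r < p := Nat.mod_lt _ hppos
    have hts : t = p * s + r := by rw [hs, hr]; exact (Nat.div_add_mod t p).symm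
    have hslt : s < p ^ e := by
      rw [hs]
      rw [pow_succ] at ht
      exact Nat.div_lt_of_lt_mul (by linarith [ht])
    -- the half of p^(e+1) - 1
    have hpe : p ^ (e + 1) = 2 * (p * u) + p := by rw [pow_succ, hu]; ring
    have hpi : (p ^ (e + 1) - 1) / 2 = p * u + k := by omega
    have hue : (p ^ e - 1) / 2 = u := by omega
    have hke : (p - 1) / 2 = k := by omega
    -- Lucas for pi choose t
    have lucas1 : ((((p ^ (e + 1) - 1) / 2).choose t : ℕ) : ZMod p)
        = ((k.choose r : ℕ) : ZMod p) * ((u.choose s : ℕ) : ZMod p) := by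
      have h := (ZMod.intCast_eq_intCast_iff _ _ p).mpr
        (Choose.choose_modEq_choose_mod_mul_choose_div
          (p := p) (n := (p ^ (e + 1) - 1) / 2) (k := t))
      push_cast at h
      rw [hpi] at h ⊢
      have h1 : (p * u + k) % p = k := by
        rw [Nat.mul_add_mod, Nat.mod_eq_of_lt (by omega)]
      have h2 : (p * u + k) / p = u := by
        rw [Nat.mul_add_div hppos, Nat.div_eq_of_lt (by omega)]
        omega
      rw [h1, h2, ← hr, ← hs] at h
      exact_mod_cast h
    -- Lucas for 2t choose t
    have lucas2 : (((2 * t).choose t : ℕ) : ZMod p)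
        = (((2 * t % p).choose r : ℕ) : ZMod p) * (((2 * t / p).choose s : ℕ) : ZMod p) := by
      have h := (ZMod.intCast_eq_intCast_iff _ _ p).mpr
        (Choose.choose_modEq_choose_mod_mul_choose_div (p := p) (n := 2 * t) (k := t))
      push_cast at h
      rw [← hr, ← hs] at h
      exact_mod_cast h
    -- splitting the powers
    have hpow4 : (4 : ZMod p) ^ t = 4 ^ r * 4 ^ s := by
      rw [hts, pow_add, pow_mul, ZMod.pow_card, mul_comm]
    have hpowm : (-1 : ZMod p) ^ t = (-1) ^ r * (-1) ^ s := by
      rw [hts, pow_add, pow_mul, (hodd'.neg_one_pow : (-1 : ZMod p) ^ p = -1), mul_comm]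
    rw [lucas1, lucas2, hpow4, hpowm]
    rcases lt_or_ge (2 * r) p with h2r | h2r
    · -- no carry
      have hm : 2 * t % p = 2 * r := by
        rw [hts]
        have : 2 * (p * s + r) = p * (2 * s) + 2 * r := by ring
        rw [this, Nat.mul_add_mod, Nat.mod_eq_of_lt h2r]
      have hd : 2 * t / p = 2 * s := by
        rw [hts]
        have : 2 * (p * s + r) = p * (2 * s) + 2 * r := by ring
        rw [this, Nat.mul_add_div hppos, Nat.div_eq_of_lt h2r]
        omega
      rw [hm, hd]
      have hbase := base_case_aux p hp hodd' r hrp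
      rw [hke] at hbase
      have hih := ih s hslt
      rw [hue] at hih
      calc 4 ^ r * 4 ^ s * ((-1 : ZMod p) ^ r * (-1) ^ s) * ((k.choose r : ZMod p) * (u.choose s : ZMod p))
          = (4 ^ r * (-1) ^ r * (k.choose r : ZMod p)) * (4 ^ s * (-1) ^ s * (u.choose s : ZMod p)) := by
            ring
        _ = ((2 * r).choose r : ZMod p) * ((2 * s).choose s : ZMod p) := by rw [hbase, hih]
    · -- carry: both sides vanish
      have hkr : k < r := by omega
      have hm : 2 * t % p = 2 * r - p := by
        rw [hts]
        have h1 : 2 * (p * s + r) = p * (2 * s + 1) + (2 * r - p) := by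
          have hx : p * (2 * s + 1) = 2 * (p * s) + p := by ring
          omega
        rw [h1, Nat.mul_add_mod, Nat.mod_eq_of_lt (by omega)]
      rw [hm, Nat.choose_eq_zero_of_lt hkr, Nat.choose_eq_zero_of_lt (show 2 * r - p < r by omega)]
      push_cast
      ring

/-- Let `p` be an odd prime, `q = p^e` with `e > 0`, and `π = (q-1)/2`. Then for every
`0 ≤ t < q`, `2^{2t} · (-1)^t · C(π, t) ≡ C(2t, t) (mod p)`; equivalently, in any commutative
ring of characteristic `p`, `(-1)^t · C(π, t) = λ_t` where `λ_t = 2^{-2t}·C(2t,t)`. -/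
theorem pow_mul_neg_one_pow_choose_modEq_prime_pow (p e : ℕ) (hp : p.Prime) (hodd : Odd p)
    (he : 0 < e) (t : ℕ) (ht : t < p ^ e) :
    (2 ^ (2 * t) * (-1) ^ t * (Nat.choose ((p ^ e - 1) / 2) t : ℤ)) ≡
      (Nat.choose (2 * t) t : ℤ) [ZMOD p] := by
  rw [← ZMod.intCast_eq_intCast_iff]
  push_cast
  rw [pow_mul]
  norm_num
  exact key_aux p hp hodd e t ht
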